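/- Let k ≥ 1 and let G_k be the connected graph on 6k + 1 vertices obtained by taking k cycles of length 7 and identifying one vertex from each of them to a single common vertex x (the cycles being otherwise pairwise disjoint). Then v(J(G_k)) = 3k. -/

import Mathlib

open MvPolynomial CategoryTheory

noncomputable section

/-- A set of vertices is a vertex cover if it meets every edge. -/
def IsVertexCover {V : Type} (G : SimpleGraph V) (C : Set V) : Prop :=
  ∀ ⦃u v : V⦄, G.Adj u v → u ∈ C ∨ v ∈ C

/-- A vertex cover minimal with respect to inclusion. -/
def IsMinimalVertexCover {V : Type} (G : SimpleGraph V) (C : Set V) : Prop :=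
  IsVertexCover G C ∧ ∀ C' ⊆ C, IsVertexCover G C' → C' = C

/-- `α₀(G)`: the minimum cardinality of a vertex cover of `G`. -/
def coverNumber {V : Type} (G : SimpleGraph V) : ℕ :=
  sInf {k | ∃ C : Set V, IsVertexCover G C ∧ C.ncard = k}

/-- `bight(I(G))`: the maximum cardinality of a minimal vertex cover of `G`. -/
def bigHeight {V : Type} (G : SimpleGraph V) : ℕ :=
  sSup {k | ∃ C : Set V, IsMinimalVertexCover G C ∧ C.ncard = k}

/-- The edge ideal `I(G) ⊆ K[x_v : v ∈ V]`, generated by the monomials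
`x_u * x_v` over the edges `{u,v}` of `G`. -/
def edgeIdeal (K : Type) [Field K] {V : Type} (G : SimpleGraph V) :
    Ideal (MvPolynomial V K) :=
  Ideal.span {m | ∃ u v : V, G.Adj u v ∧ m = X u * X v}

/-- The cover ideal `J(G) = ⋂_{{u,v} ∈ E(G)} ⟨x_u, x_v⟩`. -/
def coverIdeal (K : Type) [Field K] {V : Type} (G : SimpleGraph V) :
    Ideal (MvPolynomial V K) :=
  ⨅ (u : V) (v : V) (_ : G.Adj u v), Ideal.span {X u, X v}

/-- The v-number of a graded ideal `I`: the least `d ≥ 0` such that there is a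
homogeneous polynomial `f` of degree `d` with `I : f` a prime ideal. -/
def vNumber {K : Type} [Field K] {V : Type} (I : Ideal (MvPolynomial V K)) : ℕ :=
  sInf {d | ∃ f : MvPolynomial V K, f.IsHomogeneous d ∧
    (I.colon (Ideal.span {f})).IsPrime}

/-- The homogeneous maximal ideal `⟨x_1, …, x_n⟩` of the polynomial ring. -/
def maxIdeal (K : Type) [Field K] (V : Type) : Ideal (MvPolynomial V K) :=
  Ideal.span (Set.range (X : V → MvPolynomial V K))

/-- The depth of the module `M` with respect to the ideal `J`: the supremum of
the lengths of regular sequences on `M` consisting of elements of `J`. -/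
def mdepth {R : Type} [CommRing R] (J : Ideal R) (M : Type) [AddCommGroup M]
    [Module R M] : ℕ :=
  sSup {k | ∃ rs : List R, rs.length = k ∧ (∀ r ∈ rs, r ∈ J) ∧
    RingTheory.Sequence.IsRegular M rs}

/-- The projective dimension of an `R`-module `M`, characterized by the
vanishing of `Ext^i(M, N)` for all `i > d` and all modules `N`. -/
def projDim (R : Type) [CommRing R] (M : ModuleCat.{0} R) : ℕ :=
  sInf {d : ℕ | ∀ (N : ModuleCat.{0} R) (i : ℕ), d < i →
    Subsingleton (((Ext R (ModuleCat.{0} R) i).obj (Opposite.op M)).obj N)}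

/-- Auxiliary relation for the graph `G_k`: the common vertex `x` is `none`;
the `i`-th seven-cycle consists of `x` together with the six vertices
`(i, 0), …, (i, 5)`, with `x ~ (i,0) ~ (i,1) ~ ⋯ ~ (i,5) ~ x`. -/
def gluedAdjAux (k : ℕ) : Option (Fin k × Fin 6) → Option (Fin k × Fin 6) → Prop
  | none, some p => p.2 = 0 ∨ p.2 = 5
  | some p, some q => p.1 = q.1 ∧ (p.2 : ℕ) + 1 = (q.2 : ℕ)
  | _, _ => False

/-- The connected graph `G_k` on `6k + 1` vertices obtained from `k` disjoint
cycles of length `7` by identifying one vertex of each to a common vertex. -/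
def gluedCycles (k : ℕ) : SimpleGraph (Option (Fin k × Fin 6)) :=
  SimpleGraph.fromRel (gluedAdjAux k)


namespace VNumAux

open MvPolynomial

variable {K : Type} [Field K] {V : Type}

lemma monomial_mem_span_left {s t : V} {d : V →₀ ℕ} (c : K) (h : d s ≠ 0) :
    (monomial d c : MvPolynomial V K) ∈ Ideal.span {X s, X t} := by
  classical
  have hle : Finsupp.single s 1 ≤ d := by
    rw [Finsupp.single_le_iff]; omega
  have heq : (monomial (d - Finsupp.single s 1) c : MvPolynomial V K) * X s = monomial d c := by
    rw [X, monomial_mul, mul_one, tsub_add_cancel_of_le hle]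
  rw [← heq]
  exact Ideal.mul_mem_left _ _ (Ideal.subset_span (by simp))

lemma mem_span_pair_iff (s t : V) (p : MvPolynomial V K) :
    p ∈ Ideal.span {X s, X t} ↔ ∀ d ∈ p.support, d s ≠ 0 ∨ d t ≠ 0 := by
  classical
  constructor
  · rw [Ideal.mem_span_pair]
    rintro ⟨u, v, rfl⟩ d hd
    have hd' := MvPolynomial.support_add hd
    rw [Finset.mem_union] at hd'
    rcases hd' with hd' | hd'
    · have hmul := MvPolynomial.support_mul _ _ hd'
      rw [Finset.mem_add] at hmul
      obtain ⟨d1, h1, d2, h2, rfl⟩ := hmul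
      rw [MvPolynomial.support_X] at h2
      simp only [Finset.mem_singleton] at h2
      subst h2
      left; simp
    · have hmul := MvPolynomial.support_mul _ _ hd'
      rw [Finset.mem_add] at hmul
      obtain ⟨d1, h1, d2, h2, rfl⟩ := hmul
      rw [MvPolynomial.support_X] at h2
      simp only [Finset.mem_singleton] at h2
      subst h2
      right; simp
  · intro h
    rw [← support_sum_monomial_coeff p]
    refine Ideal.sum_mem _ fun d hd => ?_
    rcases h d hd with h' | h'
    · exact monomial_mem_span_left _ h'
    · rw [Set.pair_comm]
      exact monomial_mem_span_left _ h'

lemma monomial_mem_span_pair_iff {s t : V} {d : V →₀ ℕ} :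
    (monomial d (1 : K)) ∈ Ideal.span {X s, X t} ↔ (d s ≠ 0 ∨ d t ≠ 0) := by
  classical
  rw [mem_span_pair_iff, support_monomial]
  simp

lemma span_pair_isPrime (s t : V) :
    (Ideal.span {X s, X t} : Ideal (MvPolynomial V K)).IsPrime := by
  classical
  set g : V → MvPolynomial V K := fun w => if w = s ∨ w = t then 0 else X w with hg
  have key : ∀ p : MvPolynomial V K, p - aeval g p ∈ Ideal.span {X s, X t} := by
    intro p
    induction p using MvPolynomial.induction_on with
    | C a => simp [algebraMap_eq]
    | add p q hp hq =>
      have := Ideal.add_mem _ hp hq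
      convert this using 1; rw [map_add]; ring
    | mul_X p w hp =>
      by_cases hw : w = s ∨ w = t
      · have hX : (X w : MvPolynomial V K) ∈ Ideal.span {X s, X t} :=
          Ideal.subset_span (by rcases hw with h | h <;> simp [h])
        have heq : p * X w - aeval g (p * X w) = p * X w := by
          simp [map_mul, aeval_X, hg, if_pos hw]
        rw [heq]
        exact Ideal.mul_mem_left _ _ hX
      · have heq : p * X w - aeval g (p * X w) = (p - aeval g p) * X w := by
          simp only [map_mul, aeval_X, hg, if_neg hw]
          ring
        rw [heq]
        exact Ideal.mul_mem_right _ _ hp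
  have hker : Ideal.span {X s, X t} =
      RingHom.ker ((aeval g : MvPolynomial V K →ₐ[K] MvPolynomial V K) :
        MvPolynomial V K →+* MvPolynomial V K) := by
    apply le_antisymm
    · rw [Ideal.span_le]
      rintro x (rfl | rfl) <;>
        simp [RingHom.mem_ker, aeval_X, hg]
    · intro p hp
      have h0 : aeval g p = 0 := hp
      have hdiff := key p
      rwa [h0, sub_zero] at hdiff
  rw [hker]
  exact RingHom.ker_isPrime _

lemma mem_coverIdeal_iff {G : SimpleGraph V} {p : MvPolynomial V K} :
    p ∈ coverIdeal K G ↔ ∀ u v, G.Adj u v → p ∈ Ideal.span {X u, X v} := by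
  simp [coverIdeal, Ideal.mem_iInf]

lemma sum_eq_of_homog [Fintype V] {f : MvPolynomial V K} {n : ℕ} (hf : f.IsHomogeneous n)
    {d : V →₀ ℕ} (hd : d ∈ f.support) : ∑ w : V, d w = n := by
  have h1 : (Finsupp.weight fun _ => 1) d = n := hf (MvPolynomial.mem_support_iff.mp hd)
  rw [← Finsupp.degree_eq_weight_one] at h1
  rw [← h1, Finsupp.degree]
  exact (Finset.sum_subset (Finset.subset_univ _) (fun x _ hx => by
    simpa using Finsupp.notMem_support_iff.mp hx)).symm

lemma degree_eq_sum_univ [Fintype V] (d : V →₀ ℕ) : d.degree = ∑ w : V, d w := by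
  rw [Finsupp.degree]
  exact Finset.sum_subset (Finset.subset_univ _) (fun x _ hx => by
    simpa using Finsupp.notMem_support_iff.mp hx)

lemma pair_eq_of {α : Type*} {a b x y : α} (ha : a = x ∨ a = y) (hb : b = x ∨ b = y)
    (hab : a ≠ b) : (a = x ∧ b = y) ∨ (a = y ∧ b = x) := by
  rcases ha with rfl | rfl <;> rcases hb with rfl | rfl <;> simp_all

section Graph

lemma glued_adj_iff {k : ℕ} {a b : Option (Fin k × Fin 6)} :
    (gluedCycles k).Adj a b ↔ a ≠ b ∧ (gluedAdjAux k a b ∨ gluedAdjAux k b a) :=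
  SimpleGraph.fromRel_adj _ _ _

lemma adj_x0 {k : ℕ} (j : Fin k) : (gluedCycles k).Adj none (some (j, 0)) := by
  rw [glued_adj_iff]
  exact ⟨by simp, Or.inl (Or.inl rfl)⟩

lemma adj_x5 {k : ℕ} (j : Fin k) : (gluedCycles k).Adj none (some (j, 5)) := by
  rw [glued_adj_iff]
  exact ⟨by simp, Or.inl (Or.inr rfl)⟩

lemma adj_succ {k : ℕ} (j : Fin k) (t t' : Fin 6) (h : (t : ℕ) + 1 = (t' : ℕ)) :
    (gluedCycles k).Adj (some (j, t)) (some (j, t')) := by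
  rw [glued_adj_iff]
  refine ⟨?_, Or.inl ⟨rfl, h⟩⟩
  simp only [ne_eq, Option.some.injEq, Prod.mk.injEq, true_and]
  intro hteq
  rw [hteq] at h
  omega

lemma fin6_succ_cases {t t' : Fin 6} (h : (t : ℕ) + 1 = (t' : ℕ)) :
    (t = 0 ∧ t' = 1) ∨ (t = 1 ∧ t' = 2) ∨ (t = 2 ∧ t' = 3) ∨
      (t = 3 ∧ t' = 4) ∨ (t = 4 ∧ t' = 5) := by
  fin_cases t <;> fin_cases t' <;> revert h <;> decide

end Graph


lemma cyc_full (x a0 a1 a2 a3 a4 a5 : ℕ)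
    (h1 : x ≠ 0 ∨ a0 ≠ 0) (h2 : a0 ≠ 0 ∨ a1 ≠ 0) (h3 : a1 ≠ 0 ∨ a2 ≠ 0)
    (h4 : a2 ≠ 0 ∨ a3 ≠ 0) (h5 : a3 ≠ 0 ∨ a4 ≠ 0) (h6 : a4 ≠ 0 ∨ a5 ≠ 0)
    (h7 : a5 ≠ 0 ∨ x ≠ 0) :
    3 ≤ a0 + a1 + a2 + a3 + a4 + a5 ∧ (x = 0 → 4 ≤ a0 + a1 + a2 + a3 + a4 + a5) := by
  omega

lemma ne_pair_of_cycle_ne {k : ℕ} {j i : Fin k} (hne : j ≠ i)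
    {a b u v : Option (Fin k × Fin 6)}
    (ha : a = none ∨ ∃ t, a = some (j, t)) (hb : ∃ t, b = some (j, t))
    (hv : ∃ t, v = some (i, t)) :
    ¬((a = u ∧ b = v) ∨ (a = v ∧ b = u)) := by
  rintro (⟨h1, h2⟩ | ⟨h1, h2⟩)
  · obtain ⟨t1, rfl⟩ := hb
    obtain ⟨t2, rfl⟩ := hv
    simp only [Option.some.injEq, Prod.mk.injEq] at h2
    exact hne h2.1
  · obtain ⟨t2, rfl⟩ := hv
    rcases ha with rfl | ⟨t1, rfl⟩
    · cases h1
    · simp only [Option.some.injEq, Prod.mk.injEq] at h1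
      exact hne h1.1

lemma hfull_of {k : ℕ} (e : Option (Fin k × Fin 6) → ℕ) (i : Fin k)
    (u v : Option (Fin k × Fin 6)) (hv : ∃ t, v = some (i, t))
    (H : ∀ a b, (gluedCycles k).Adj a b → ¬((a = u ∧ b = v) ∨ (a = v ∧ b = u)) →
      e a ≠ 0 ∨ e b ≠ 0) :
    ∀ j, j ≠ i → 3 ≤ (∑ t : Fin 6, e (some (j, t))) ∧
      (e none = 0 → 4 ≤ ∑ t : Fin 6, e (some (j, t))) := by
  intro j hj
  have h1 := H none (some (j, 0)) (adj_x0 j)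
    (ne_pair_of_cycle_ne hj (Or.inl rfl) ⟨0, rfl⟩ hv)
  have h2 := H (some (j, 0)) (some (j, 1)) (adj_succ j 0 1 rfl)
    (ne_pair_of_cycle_ne hj (Or.inr ⟨0, rfl⟩) ⟨1, rfl⟩ hv)
  have h3 := H (some (j, 1)) (some (j, 2)) (adj_succ j 1 2 rfl)
    (ne_pair_of_cycle_ne hj (Or.inr ⟨1, rfl⟩) ⟨2, rfl⟩ hv)
  have h4 := H (some (j, 2)) (some (j, 3)) (adj_succ j 2 3 rfl)
    (ne_pair_of_cycle_ne hj (Or.inr ⟨2, rfl⟩) ⟨3, rfl⟩ hv)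
  have h5 := H (some (j, 3)) (some (j, 4)) (adj_succ j 3 4 rfl)
    (ne_pair_of_cycle_ne hj (Or.inr ⟨3, rfl⟩) ⟨4, rfl⟩ hv)
  have h6 := H (some (j, 4)) (some (j, 5)) (adj_succ j 4 5 rfl)
    (ne_pair_of_cycle_ne hj (Or.inr ⟨4, rfl⟩) ⟨5, rfl⟩ hv)
  have h7 := H none (some (j, 5)) (adj_x5 j)
    (ne_pair_of_cycle_ne hj (Or.inl rfl) ⟨5, rfl⟩ hv)
  rw [Fin.sum_univ_six]
  exact cyc_full _ _ _ _ _ _ _ h1 h2 h3 h4 h5 h6 (by tauto)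

lemma combine {k : ℕ} (hk : 1 ≤ k) (x : ℕ) (c : Fin k → ℕ) (i : Fin k)
    (hsp : 2 ≤ c i ∧ (x = 0 → 3 ≤ c i))
    (hfull : ∀ j, j ≠ i → 3 ≤ c j ∧ (x = 0 → 4 ≤ c j)) :
    3 * k ≤ x + ∑ j : Fin k, c j := by
  have hsplit := Finset.add_sum_erase Finset.univ c (Finset.mem_univ i)
  have hcard3 : (Finset.univ.erase i).card • 3 ≤ ∑ j ∈ Finset.univ.erase i, c j :=
    Finset.card_nsmul_le_sum _ _ _ (fun j hj => (hfull j (Finset.ne_of_mem_erase hj)).1)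
  rw [Finset.card_erase_of_mem (Finset.mem_univ i), Finset.card_univ,
    Fintype.card_fin, smul_eq_mul] at hcard3
  by_cases hx : x = 0
  · have hcard4 : (Finset.univ.erase i).card • 4 ≤ ∑ j ∈ Finset.univ.erase i, c j :=
      Finset.card_nsmul_le_sum _ _ _ (fun j hj => (hfull j (Finset.ne_of_mem_erase hj)).2 hx)
    rw [Finset.card_erase_of_mem (Finset.mem_univ i), Finset.card_univ,
      Fintype.card_fin, smul_eq_mul] at hcard4
    have h3 := hsp.2 hx
    omega
  · have h2 := hsp.1
    omega

lemma key_count' {k : ℕ} (hk : 1 ≤ k) (e : Option (Fin k × Fin 6) → ℕ)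
    (u v : Option (Fin k × Fin 6)) (haux : gluedAdjAux k u v)
    (hu : e u = 0) (hv : e v = 0)
    (H : ∀ a b, (gluedCycles k).Adj a b → ¬((a = u ∧ b = v) ∨ (a = v ∧ b = u)) →
      e a ≠ 0 ∨ e b ≠ 0) :
    3 * k ≤ e none + ∑ j : Fin k, ∑ t : Fin 6, e (some (j, t)) := by
  cases u with
  | none =>
    cases v with
    | none => exact haux.elim
    | some p =>
      obtain ⟨i, t⟩ := p
      have hfull := hfull_of e i none (some (i, t)) ⟨t, rfl⟩ H
      rcases haux with rfl | rfl
      · -- special edge (x, (i,0))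
        have g2 := H (some (i, 0)) (some (i, 1)) (adj_succ i 0 1 rfl)
          (by simp)
        have g3 := H (some (i, 1)) (some (i, 2)) (adj_succ i 1 2 rfl)
          (by simp)
        have g4 := H (some (i, 2)) (some (i, 3)) (adj_succ i 2 3 rfl)
          (by simp)
        have g5 := H (some (i, 3)) (some (i, 4)) (adj_succ i 3 4 rfl)
          (by simp)
        have g6 := H (some (i, 4)) (some (i, 5)) (adj_succ i 4 5 rfl)
          (by simp)
        have g7 := H none (some (i, 5)) (adj_x5 i)
          (by simp)
        refine combine hk (e none) _ i ⟨?_, ?_⟩ hfull <;>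
          simp only [Fin.sum_univ_six] <;> omega
      · -- special edge (x, (i,5))
        have g1 := H none (some (i, 0)) (adj_x0 i)
          (by simp)
        have g2 := H (some (i, 0)) (some (i, 1)) (adj_succ i 0 1 rfl)
          (by simp)
        have g3 := H (some (i, 1)) (some (i, 2)) (adj_succ i 1 2 rfl)
          (by simp)
        have g4 := H (some (i, 2)) (some (i, 3)) (adj_succ i 2 3 rfl)
          (by simp)
        have g5 := H (some (i, 3)) (some (i, 4)) (adj_succ i 3 4 rfl)
          (by simp)
        have g6 := H (some (i, 4)) (some (i, 5)) (adj_succ i 4 5 rfl)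
          (by simp)
        refine combine hk (e none) _ i ⟨?_, ?_⟩ hfull <;>
          simp only [Fin.sum_univ_six] <;> omega
  | some p =>
    cases v with
    | none => exact haux.elim
    | some q =>
      obtain ⟨i, t⟩ := p
      obtain ⟨i', t'⟩ := q
      obtain ⟨hii', htt'⟩ := haux
      simp only at hii' htt'
      subst hii'
      have hfull := hfull_of e i (some (i, t)) (some (i, t')) ⟨t', rfl⟩ H
      have g1 := H none (some (i, 0)) (adj_x0 i)
        (by simp)
      have g7 := H none (some (i, 5)) (adj_x5 i)
        (by simp)
      rcases fin6_succ_cases htt' with ⟨rfl, rfl⟩ | ⟨rfl, rfl⟩ | ⟨rfl, rfl⟩ |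
        ⟨rfl, rfl⟩ | ⟨rfl, rfl⟩
      · have g3 := H (some (i, 1)) (some (i, 2)) (adj_succ i 1 2 rfl)
          (by simp)
        have g4 := H (some (i, 2)) (some (i, 3)) (adj_succ i 2 3 rfl)
          (by simp)
        have g5 := H (some (i, 3)) (some (i, 4)) (adj_succ i 3 4 rfl)
          (by simp)
        have g6 := H (some (i, 4)) (some (i, 5)) (adj_succ i 4 5 rfl)
          (by simp)
        refine combine hk (e none) _ i ⟨?_, ?_⟩ hfull <;>
          simp only [Fin.sum_univ_six] <;> omega
      · have g2 := H (some (i, 0)) (some (i, 1)) (adj_succ i 0 1 rfl)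
          (by simp)
        have g4 := H (some (i, 2)) (some (i, 3)) (adj_succ i 2 3 rfl)
          (by simp)
        have g5 := H (some (i, 3)) (some (i, 4)) (adj_succ i 3 4 rfl)
          (by simp)
        have g6 := H (some (i, 4)) (some (i, 5)) (adj_succ i 4 5 rfl)
          (by simp)
        refine combine hk (e none) _ i ⟨?_, ?_⟩ hfull <;>
          simp only [Fin.sum_univ_six] <;> omega
      · have g2 := H (some (i, 0)) (some (i, 1)) (adj_succ i 0 1 rfl)
          (by simp)
        have g3 := H (some (i, 1)) (some (i, 2)) (adj_succ i 1 2 rfl)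
          (by simp)
        have g5 := H (some (i, 3)) (some (i, 4)) (adj_succ i 3 4 rfl)
          (by simp)
        have g6 := H (some (i, 4)) (some (i, 5)) (adj_succ i 4 5 rfl)
          (by simp)
        refine combine hk (e none) _ i ⟨?_, ?_⟩ hfull <;>
          simp only [Fin.sum_univ_six] <;> omega
      · have g2 := H (some (i, 0)) (some (i, 1)) (adj_succ i 0 1 rfl)
          (by simp)
        have g3 := H (some (i, 1)) (some (i, 2)) (adj_succ i 1 2 rfl)
          (by simp)
        have g4 := H (some (i, 2)) (some (i, 3)) (adj_succ i 2 3 rfl)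
          (by simp)
        have g6 := H (some (i, 4)) (some (i, 5)) (adj_succ i 4 5 rfl)
          (by simp)
        refine combine hk (e none) _ i ⟨?_, ?_⟩ hfull <;>
          simp only [Fin.sum_univ_six] <;> omega
      · have g2 := H (some (i, 0)) (some (i, 1)) (adj_succ i 0 1 rfl)
          (by simp)
        have g3 := H (some (i, 1)) (some (i, 2)) (adj_succ i 1 2 rfl)
          (by simp)
        have g4 := H (some (i, 2)) (some (i, 3)) (adj_succ i 2 3 rfl)
          (by simp)
        have g5 := H (some (i, 3)) (some (i, 4)) (adj_succ i 3 4 rfl)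
          (by simp)
        refine combine hk (e none) _ i ⟨?_, ?_⟩ hfull <;>
          simp only [Fin.sum_univ_six] <;> omega

lemma key_count {k : ℕ} (hk : 1 ≤ k) (e : Option (Fin k × Fin 6) → ℕ)
    (u v : Option (Fin k × Fin 6)) (hadj : (gluedCycles k).Adj u v)
    (hu : e u = 0) (hv : e v = 0)
    (H : ∀ a b, (gluedCycles k).Adj a b → ¬((a = u ∧ b = v) ∨ (a = v ∧ b = u)) →
      e a ≠ 0 ∨ e b ≠ 0) :
    3 * k ≤ e none + ∑ j : Fin k, ∑ t : Fin 6, e (some (j, t)) := by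
  rw [glued_adj_iff] at hadj
  rcases hadj.2 with haux | haux
  · exact key_count' hk e u v haux hu hv H
  · exact key_count' hk e v u haux hv hu (fun a b hab hne => H a b hab (by tauto))




def gfun (k : ℕ) (i0 : Fin k) : Option (Fin k × Fin 6) → ℕ
  | none => 1
  | some (j, t) =>
    if j = i0 then (if t = 1 ∨ t = 4 then 1 else 0)
    else (if t = 1 ∨ t = 3 ∨ t = 5 then 1 else 0)

lemma classify' {k : ℕ} (i0 : Fin k) {u v : Option (Fin k × Fin 6)}
    (haux : gluedAdjAux k u v) :
    (gfun k i0 u ≠ 0 ∨ gfun k i0 v ≠ 0) ∨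
      ((u = some (i0, 2) ∧ v = some (i0, 3)) ∨ (u = some (i0, 3) ∧ v = some (i0, 2))) := by
  cases u with
  | none => exact Or.inl (Or.inl (by simp [gfun]))
  | some p =>
    cases v with
    | none => exact haux.elim
    | some q =>
      obtain ⟨j, t⟩ := p
      obtain ⟨j', t'⟩ := q
      obtain ⟨hjj', htt'⟩ := haux
      simp only at hjj' htt'
      subst hjj'
      by_cases hj : j = i0
      · subst hj
        rcases fin6_succ_cases htt' with ⟨rfl, rfl⟩ | ⟨rfl, rfl⟩ | ⟨rfl, rfl⟩ |
          ⟨rfl, rfl⟩ | ⟨rfl, rfl⟩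
        · exact Or.inl (Or.inr (by simp [gfun]))
        · exact Or.inl (Or.inl (by simp [gfun]))
        · exact Or.inr (Or.inl ⟨rfl, rfl⟩)
        · exact Or.inl (Or.inr (by simp [gfun]))
        · exact Or.inl (Or.inl (by simp [gfun]))
      · rcases fin6_succ_cases htt' with ⟨rfl, rfl⟩ | ⟨rfl, rfl⟩ | ⟨rfl, rfl⟩ |
          ⟨rfl, rfl⟩ | ⟨rfl, rfl⟩
        · exact Or.inl (Or.inr (by simp [gfun, hj]))
        · exact Or.inl (Or.inl (by simp [gfun, hj]))
        · exact Or.inl (Or.inr (by simp [gfun, hj]))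
        · exact Or.inl (Or.inl (by simp [gfun, hj]))
        · exact Or.inl (Or.inr (by simp [gfun, hj]))

lemma classify {k : ℕ} (i0 : Fin k) {u v : Option (Fin k × Fin 6)}
    (h : (gluedCycles k).Adj u v) :
    (gfun k i0 u ≠ 0 ∨ gfun k i0 v ≠ 0) ∨
      ((u = some (i0, 2) ∧ v = some (i0, 3)) ∨ (u = some (i0, 3) ∧ v = some (i0, 2))) := by
  rw [glued_adj_iff] at h
  rcases h.2 with haux | haux
  · exact classify' i0 haux
  · rcases classify' i0 haux with h' | h' <;> tauto

lemma sum_gfun {k : ℕ} (hk : 1 ≤ k) (i0 : Fin k) :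
    ∑ w : Option (Fin k × Fin 6), gfun k i0 w = 3 * k := by
  rw [Fintype.sum_option, Fintype.sum_prod_type]
  have hinner : ∀ j : Fin k, ∑ t : Fin 6, gfun k i0 (some (j, t)) =
      if j = i0 then 2 else 3 := by
    intro j
    by_cases hj : j = i0 <;> rw [Fin.sum_univ_six] <;> simp [gfun, hj]
  rw [Finset.sum_congr rfl (fun j _ => hinner j)]
  rw [← Finset.add_sum_erase _ _ (Finset.mem_univ i0), if_pos rfl]
  rw [Finset.sum_congr rfl (fun j hj => if_neg (Finset.ne_of_mem_erase hj))]
  rw [Finset.sum_const, Finset.card_erase_of_mem (Finset.mem_univ i0),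
    Finset.card_univ, Fintype.card_fin, smul_eq_mul]
  have hnone : gfun k i0 none = 1 := rfl
  omega


lemma colon_prime_unique_edge {K : Type} [Field K] {k : ℕ}
    {f : MvPolynomial (Option (Fin k × Fin 6)) K}
    (hfprime : ((coverIdeal K (gluedCycles k)).colon (Ideal.span {f})).IsPrime)
    {u1 v1 u v : Option (Fin k × Fin 6)}
    (h1 : (gluedCycles k).Adj u1 v1) (hn1 : f ∉ Ideal.span {X u1, X v1})
    (h2 : (gluedCycles k).Adj u v) (hn2 : f ∉ Ideal.span {X u, X v}) :
    (u = u1 ∧ v = v1) ∨ (u = v1 ∧ v = u1) := by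
  classical
  by_contra hne
  set dd : Option (Fin k × Fin 6) → Option (Fin k × Fin 6) →
      (Option (Fin k × Fin 6) →₀ ℕ) :=
    fun a b => Finsupp.equivFunOnFinite.symm (fun w => if w = a ∨ w = b then 0 else 1)
    with hdd
  have hddval : ∀ a b w, dd a b w = if w = a ∨ w = b then 0 else 1 := by
    intro a b w; simp [hdd]
  set g1 : MvPolynomial (Option (Fin k × Fin 6)) K := monomial (dd u1 v1) 1 with hg1
  set g2 : MvPolynomial (Option (Fin k × Fin 6)) K := monomial (dd u v) 1 with hg2
  have hgmem : ∀ (a b s t : Option (Fin k × Fin 6)),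
      (monomial (dd a b) 1 : MvPolynomial (Option (Fin k × Fin 6)) K) ∈
        Ideal.span {X s, X t} ↔ (¬(s = a ∨ s = b) ∨ ¬(t = a ∨ t = b)) := by
    intro a b s t
    rw [monomial_mem_span_pair_iff, hddval, hddval]
    by_cases hs : s = a ∨ s = b <;> by_cases ht : t = a ∨ t = b <;>
      simp [hs, ht]
  have hg1notin : g1 ∉ (coverIdeal K (gluedCycles k)).colon (Ideal.span {f}) := by
    intro hmem
    rw [Ideal.mem_colon_span_singleton, mem_coverIdeal_iff] at hmem
    have h := hmem u1 v1 h1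
    rcases (span_pair_isPrime u1 v1).mem_or_mem h with h' | h'
    · rw [hg1, hgmem] at h'
      tauto
    · exact hn1 h'
  have hg2notin : g2 ∉ (coverIdeal K (gluedCycles k)).colon (Ideal.span {f}) := by
    intro hmem
    rw [Ideal.mem_colon_span_singleton, mem_coverIdeal_iff] at hmem
    have h := hmem u v h2
    rcases (span_pair_isPrime u v).mem_or_mem h with h' | h'
    · rw [hg2, hgmem] at h'
      tauto
    · exact hn2 h'
  have hprod : g1 * g2 ∈ (coverIdeal K (gluedCycles k)).colon (Ideal.span {f}) := by
    rw [Ideal.mem_colon_span_singleton, mem_coverIdeal_iff]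
    intro a b hab
    by_cases hf : f ∈ Ideal.span {X a, X b}
    · exact Ideal.mul_mem_left _ _ hf
    · have hcl : g1 ∈ Ideal.span {X a, X b} ∨ g2 ∈ Ideal.span {X a, X b} := by
        by_contra hcon
        push_neg at hcon
        obtain ⟨hc1, hc2⟩ := hcon
        rw [hg1, hgmem] at hc1
        rw [hg2, hgmem] at hc2
        push_neg at hc1 hc2
        obtain ⟨ha1, hb1⟩ := hc1
        obtain ⟨ha2, hb2⟩ := hc2
        have hP1 := pair_eq_of ha1 hb1 hab.ne
        have hP2 := pair_eq_of ha2 hb2 hab.ne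
        rcases hP1 with ⟨e1, e2⟩ | ⟨e1, e2⟩ <;> rcases hP2 with ⟨e3, e4⟩ | ⟨e3, e4⟩ <;>
          apply hne <;>
          [ exact Or.inl ⟨e3.symm.trans e1, e4.symm.trans e2⟩;
            exact Or.inr ⟨e4.symm.trans e2, e3.symm.trans e1⟩;
            exact Or.inr ⟨e3.symm.trans e1, e4.symm.trans e2⟩;
            exact Or.inl ⟨e4.symm.trans e2, e3.symm.trans e1⟩ ]
      rcases hcl with h' | h'
      · have heq : g1 * g2 * f = g1 * (g2 * f) := by ring
        rw [heq]
        exact Ideal.mul_mem_right _ _ h'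
      · have heq : g1 * g2 * f = g2 * (g1 * f) := by ring
        rw [heq]
        exact Ideal.mul_mem_right _ _ h'
  rcases hfprime.mem_or_mem hprod with h' | h'
  · exact hg1notin h'
  · exact hg2notin h'

end VNumAux

/-- For the graph `G_k` obtained by gluing `k` seven-cycles at a common
vertex, `v(J(G_k)) = 3k`. -/
theorem vNumber_coverIdeal_gluedCycles
    {K : Type} [Field K] (k : ℕ) (hk : 1 ≤ k) :
    vNumber (coverIdeal K (gluedCycles k)) = 3 * k := by
  classical
  open VNumAux in
  set i0 : Fin k := ⟨0, hk⟩ with hi0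
  set d0 : Option (Fin k × Fin 6) →₀ ℕ :=
    Finsupp.equivFunOnFinite.symm (VNumAux.gfun k i0) with hd0def
  have hd0 : ∀ w, d0 w = VNumAux.gfun k i0 w := fun w => by simp [hd0def]
  set f0 : MvPolynomial (Option (Fin k × Fin 6)) K := monomial d0 1 with hf0
  have hmem : ∀ s t : Option (Fin k × Fin 6),
      f0 ∈ Ideal.span {X s, X t} ↔
        (VNumAux.gfun k i0 s ≠ 0 ∨ VNumAux.gfun k i0 t ≠ 0) := by
    intro s t
    rw [hf0, VNumAux.monomial_mem_span_pair_iff, hd0, hd0]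
  have hhom : f0.IsHomogeneous (3 * k) := by
    rw [hf0]
    apply isHomogeneous_monomial
    rw [VNumAux.degree_eq_sum_univ]
    rw [Finset.sum_congr rfl (fun w _ => hd0 w)]
    exact VNumAux.sum_gfun hk i0
  have hprime := VNumAux.span_pair_isPrime (K := K)
    (some (i0, (2 : Fin 6))) (some (i0, (3 : Fin 6)))
  have hf0notin : f0 ∉ Ideal.span {X (some (i0, (2 : Fin 6))), X (some (i0, (3 : Fin 6)))} := by
    rw [hmem]
    push_neg
    constructor <;> simp [VNumAux.gfun]
  have hcolon : (coverIdeal K (gluedCycles k)).colon (Ideal.span {f0}) =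
      Ideal.span {X (some (i0, (2 : Fin 6))), X (some (i0, (3 : Fin 6)))} := by
    apply le_antisymm
    · intro r hr
      rw [Ideal.mem_colon_span_singleton, VNumAux.mem_coverIdeal_iff] at hr
      have h23 := hr _ _ (VNumAux.adj_succ i0 2 3 rfl)
      rcases hprime.mem_or_mem h23 with h | h
      · exact h
      · exact absurd h hf0notin
    · intro r hr
      rw [Ideal.mem_colon_span_singleton, VNumAux.mem_coverIdeal_iff]
      intro u v huv
      rcases VNumAux.classify i0 huv with hcov | hsp
      · exact Ideal.mul_mem_left _ r ((hmem u v).mpr hcov)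
      · rcases hsp with ⟨rfl, rfl⟩ | ⟨rfl, rfl⟩
        · exact Ideal.mul_mem_right _ _ hr
        · rw [Set.pair_comm]
          exact Ideal.mul_mem_right _ _ hr
  have hmem3k : 3 * k ∈ {d | ∃ f : MvPolynomial (Option (Fin k × Fin 6)) K,
      f.IsHomogeneous d ∧
        ((coverIdeal K (gluedCycles k)).colon (Ideal.span {f})).IsPrime} :=
    ⟨f0, hhom, by rw [hcolon]; exact hprime⟩
  have hlow : ∀ d ∈ {d | ∃ f : MvPolynomial (Option (Fin k × Fin 6)) K,
      f.IsHomogeneous d ∧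
        ((coverIdeal K (gluedCycles k)).colon (Ideal.span {f})).IsPrime},
      3 * k ≤ d := by
    rintro d ⟨f, hfhom, hfprime⟩
    have hfJ : f ∉ coverIdeal K (gluedCycles k) := by
      intro hf
      apply hfprime.ne_top
      rw [Ideal.eq_top_iff_one, Ideal.mem_colon_span_singleton, one_mul]
      exact hf
    rw [VNumAux.mem_coverIdeal_iff] at hfJ
    push_neg at hfJ
    obtain ⟨u1, v1, hadj1, hnotin1⟩ := hfJ
    have Huncov : ∀ u v, (gluedCycles k).Adj u v → f ∉ Ideal.span {X u, X v} →
        ((u = u1 ∧ v = v1) ∨ (u = v1 ∧ v = u1)) := fun u v huv hn =>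
      VNumAux.colon_prime_unique_edge hfprime hadj1 hnotin1 huv hn
    rw [VNumAux.mem_span_pair_iff] at hnotin1
    push_neg at hnotin1
    obtain ⟨e0, he0supp, he0u, he0v⟩ := hnotin1
    have H : ∀ a b, (gluedCycles k).Adj a b →
        ¬((a = u1 ∧ b = v1) ∨ (a = v1 ∧ b = u1)) → e0 a ≠ 0 ∨ e0 b ≠ 0 := by
      intro a b hab hnepair
      by_cases hf : f ∈ Ideal.span {X a, X b}
      · rw [VNumAux.mem_span_pair_iff] at hf
        exact hf e0 he0supp
      · exact absurd (Huncov a b hab hf) hnepair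
    have hKC := VNumAux.key_count hk (fun w => e0 w) u1 v1 hadj1 he0u he0v H
    have hsum : e0 none + ∑ j : Fin k, ∑ t : Fin 6, e0 (some (j, t)) =
        ∑ w : Option (Fin k × Fin 6), e0 w := by
      rw [Fintype.sum_option, Fintype.sum_prod_type]
    have hdeg := VNumAux.sum_eq_of_homog hfhom he0supp
    rw [hsum, hdeg] at hKC
    exact hKC
  rw [vNumber]
  exact le_antisymm (Nat.sInf_le hmem3k) (le_csInf ⟨_, hmem3k⟩ hlow)

end
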